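/- Let X = (P,Q,R) be a cubic polynomial vector field in R³ such that 2(Px+Qy+Rz) = K·(x²+y²+z²-1) for some polynomial K. Then there exist polynomials f, g, h of degree at most 1 and polynomials A, B, C of degree at most 2 with zero constant term such that P = (1-x²-y²-z²)f + Ay + Bz, Q = (1-x²-y²-z²)g - Ax + Cz, and R = (1-x²-y²-z²)h - Bx - Cy. -/
import Mathlib
open MvPolynomial

namespace Stmt2Aux

noncomputable def phi (i : Fin 3) : MvPolynomial (Fin 3) ℝ →ₐ[ℝ] MvPolynomial (Fin 3) ℝ :=
  aeval (fun j => if j = i then 0 else X j)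

@[simp] lemma phi_X (i j : Fin 3) : phi i (X j) = if j = i then 0 else X j := by
  simp [phi]

lemma X_dvd_sub_phi (i : Fin 3) (p : MvPolynomial (Fin 3) ℝ) : X i ∣ p - phi i p := by
  induction p using MvPolynomial.induction_on with
  | C a => simp [phi]
  | add p q hp hq =>
    have : p + q - phi i (p + q) = (p - phi i p) + (q - phi i q) := by
      rw [map_add]; ring
    rw [this]; exact dvd_add hp hq
  | mul_X p j hp =>
    rw [map_mul, phi_X]
    by_cases hj : j = i
    · subst hj
      rw [if_pos rfl, mul_zero, sub_zero]
      exact Dvd.intro_left p rfl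
    · rw [if_neg hj]
      have : p * X j - phi i p * X j = (p - phi i p) * X j := by ring
      rw [this]
      exact Dvd.dvd.mul_right hp _

lemma X_dvd_of_phi_eq_zero {i : Fin 3} {p : MvPolynomial (Fin 3) ℝ} (h : phi i p = 0) :
    X i ∣ p := by
  have := X_dvd_sub_phi i p
  rwa [h, sub_zero] at this

lemma phi_eq_zero_of_dvd {i : Fin 3} {p : MvPolynomial (Fin 3) ℝ} (h : X i ∣ p) :
    phi i p = 0 := by
  obtain ⟨q, rfl⟩ := h
  rw [map_mul, phi_X, if_pos rfl, zero_mul]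

end Stmt2Aux

namespace Stmt2Aux

lemma totalDegree_phi_le (i : Fin 3) (p : MvPolynomial (Fin 3) ℝ) :
    (phi i p).totalDegree ≤ p.totalDegree := by
  conv_lhs => rw [p.as_sum]
  rw [map_sum]
  apply totalDegree_finsetSum_le
  intro d hd
  show ((aeval (fun j => if j = i then 0 else X j)) (monomial d (coeff d p))).totalDegree ≤ _
  rw [aeval_monomial]
  refine le_trans (totalDegree_mul _ _) ?_
  have h1 : (algebraMap ℝ (MvPolynomial (Fin 3) ℝ) (coeff d p)).totalDegree = 0 :=
    totalDegree_C _
  rw [h1, zero_add]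
  refine le_trans (totalDegree_finset_prod _ _) ?_
  refine le_trans ?_ (le_totalDegree hd)
  rw [Finsupp.sum]
  apply Finset.sum_le_sum
  intro j hj
  simp only []
  by_cases hji : j = i
  · have hdi : d i ≠ 0 := by rw [← hji]; exact Finsupp.mem_support_iff.mp hj
    simp [hji, zero_pow hdi]
  · simp [hji, totalDegree_X_pow]

lemma constantCoeff_phi (i : Fin 3) (p : MvPolynomial (Fin 3) ℝ) :
    constantCoeff (phi i p) = constantCoeff p := by
  induction p using MvPolynomial.induction_on with
  | C a => simp [phi]
  | add p q hp hq => simp [map_add, hp, hq]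
  | mul_X p j hp =>
    rw [map_mul, phi_X]
    by_cases hj : j = i
    · rw [if_pos hj]; simp
    · rw [if_neg hj]; simp [hp]

lemma phi_phi (i : Fin 3) (p : MvPolynomial (Fin 3) ℝ) :
    phi i (phi i p) = phi i p := by
  induction p using MvPolynomial.induction_on with
  | C a => simp [phi]
  | add p q hp hq => simp [map_add, hp, hq]
  | mul_X p j hp =>
    rw [map_mul, phi_X]
    by_cases hj : j = i
    · rw [if_pos hj]; simp
    · rw [if_neg hj]; rw [map_mul, hp, phi_X, if_neg hj]

lemma phi_all (p : MvPolynomial (Fin 3) ℝ) :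
    phi 2 (phi 1 (phi 0 p)) = C (constantCoeff p) := by
  induction p using MvPolynomial.induction_on with
  | C a => simp [phi]
  | add p q hp hq => simp [map_add, hp, hq]
  | mul_X p j hp =>
    fin_cases j <;> simp [map_mul, hp]

end Stmt2Aux

namespace Stmt2Aux

lemma sum_eq_degree (d : Fin 3 →₀ ℕ) : (d.sum fun _ e => e) = d.degree := rfl

lemma top_component_ne_zero {p : MvPolynomial (Fin 3) ℝ} (hp : p ≠ 0) :
    homogeneousComponent p.totalDegree p ≠ 0 := by
  obtain ⟨d, hd, hdeg⟩ := Finset.exists_mem_eq_sup p.support (support_nonempty.mpr hp)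
    (fun s => s.sum fun _ e => e)
  intro h
  have hc : coeff d (homogeneousComponent p.totalDegree p) = coeff d p := by
    rw [coeff_homogeneousComponent, if_pos]
    rw [← sum_eq_degree, ← hdeg]; rfl
  rw [h, coeff_zero] at hc
  exact mem_support_iff.mp hd hc.symm

lemma le_totalDegree_mul {p q : MvPolynomial (Fin 3) ℝ} (hp : p ≠ 0) (hq : q ≠ 0) :
    p.totalDegree + q.totalDegree ≤ (p * q).totalDegree := by
  set m := p.totalDegree with hm
  set n := q.totalDegree with hn
  set pm := homogeneousComponent m p with hpmdef
  set qn := homogeneousComponent n q with hqndef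
  have hpm : pm ≠ 0 := top_component_ne_zero hp
  have hqn : qn ≠ 0 := top_component_ne_zero hq
  have hmul : pm * qn ≠ 0 := mul_ne_zero hpm hqn
  obtain ⟨d, hd⟩ := support_nonempty.mpr hmul
  have hhom : (pm * qn).IsHomogeneous (m + n) :=
    (homogeneousComponent_isHomogeneous m p).mul (homogeneousComponent_isHomogeneous n q)
  have hdeg : d.degree = m + n := by
    rw [Finsupp.degree_eq_weight_one]
    exact hhom (mem_support_iff.mp hd)
  -- key: coeff d (p*q) = coeff d (pm*qn)
  have hkey : coeff d (p * q) = coeff d (pm * qn) := by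
    rw [coeff_mul, coeff_mul]
    apply Finset.sum_congr rfl
    rintro ⟨u, v⟩ huv
    have huvsum : u + v = d := Finset.HasAntidiagonal.mem_antidiagonal.mp huv
    by_cases hu : u.degree ≤ m
    · by_cases hv : v.degree ≤ n
      · have hsum : u.degree + v.degree = m + n := by
          rw [← hdeg, ← huvsum]
          simp [Finsupp.degree_eq_weight_one, map_add]
        have hu' : u.degree = m := by omega
        have hv' : v.degree = n := by omega
        rw [hpmdef, hqndef, coeff_homogeneousComponent, coeff_homogeneousComponent,
          if_pos hu', if_pos hv']
      · have h1 : coeff v q = 0 := by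
          apply coeff_eq_zero_of_totalDegree_lt
          rw [← hn]
          have : v.degree = ∑ i ∈ v.support, v i := rfl
          omega
        have h2 : coeff v qn = 0 := by
          rw [hqndef, coeff_homogeneousComponent, if_neg]; omega
        rw [h1, h2, mul_zero, mul_zero]
    · have h1 : coeff u p = 0 := by
        apply coeff_eq_zero_of_totalDegree_lt
        rw [← hm]
        have : u.degree = ∑ i ∈ u.support, u i := rfl
        omega
      have h2 : coeff u pm = 0 := by
        rw [hpmdef, coeff_homogeneousComponent, if_neg]; omega
      rw [h1, h2, zero_mul, zero_mul]
  have hne : coeff d (p * q) ≠ 0 := by rw [hkey]; exact mem_support_iff.mp hd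
  calc m + n = d.sum fun _ e => e := by rw [sum_eq_degree, hdeg]
  _ ≤ (p * q).totalDegree := le_totalDegree (mem_support_iff.mpr hne)

end Stmt2Aux

namespace Stmt2Aux

@[simp] lemma phi_X_self (i : Fin 3) : phi i (X i) = 0 := by simp [phi]

lemma phi_X_ne {i j : Fin 3} (h : j ≠ i) : phi i (X j) = X j := by simp [phi, h]

@[simp] lemma phi0_X1 : phi 0 (X 1) = X 1 := phi_X_ne (by decide)
@[simp] lemma phi0_X2 : phi 0 (X 2) = X 2 := phi_X_ne (by decide)
@[simp] lemma phi2_X0 : phi 2 (X 0) = X 0 := phi_X_ne (by decide)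
@[simp] lemma phi2_X1 : phi 2 (X 1) = X 1 := phi_X_ne (by decide)

lemma deg_quot {i : Fin 3} {A M : MvPolynomial (Fin 3) ℝ} {n : ℕ}
    (hEq : X i * A = M) (hM : M.totalDegree ≤ n + 1) : A.totalDegree ≤ n := by
  by_cases hA : A = 0
  · simp [hA]
  · have := le_totalDegree_mul (X_ne_zero i) hA
    rw [hEq, totalDegree_X] at this
    omega

lemma koszul {P₁ Q₁ R₁ : MvPolynomial (Fin 3) ℝ}
    (hP : P₁.totalDegree ≤ 3) (hQ : Q₁.totalDegree ≤ 3) (hR : R₁.totalDegree ≤ 3)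
    (hrel : P₁ * X 0 + Q₁ * X 1 + R₁ * X 2 = 0) :
    ∃ A B Cc : MvPolynomial (Fin 3) ℝ, A.totalDegree ≤ 2 ∧ B.totalDegree ≤ 2 ∧
      Cc.totalDegree ≤ 2 ∧
      P₁ = A * X 1 + B * X 2 ∧ Q₁ = - (A * X 0) + Cc * X 2 ∧
      R₁ = - (B * X 0) - Cc * X 1 := by
  set Q' := phi 0 Q₁ with hQ'def
  set R' := phi 0 R₁ with hR'def
  have h0 : Q' * X 1 + R' * X 2 = 0 := by
    have := congrArg (phi 0) hrel
    simpa [map_add, map_mul] using this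
  have hphi2 : phi 2 Q' = 0 := by
    have h2 := congrArg (phi 2) h0
    simp only [map_add, map_mul, map_zero, phi2_X1, phi_X_self, mul_zero, add_zero] at h2
    rcases mul_eq_zero.mp h2 with h | h
    · exact h
    · exact absurd h (X_ne_zero 1)
  obtain ⟨Cc, hCc⟩ : X 2 ∣ Q' := X_dvd_of_phi_eq_zero hphi2
  have hphiCc : phi 0 Cc = Cc := by
    have h1 : phi 0 Q' = Q' := phi_phi 0 Q₁
    rw [hCc, map_mul, phi0_X2] at h1
    exact mul_left_cancel₀ (X_ne_zero 2) h1
  have hR'eq : R' = - (Cc * X 1) := by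
    have h2 : X 2 * (Cc * X 1 + R') = 0 := by linear_combination h0 - X 1 * hCc
    rcases mul_eq_zero.mp h2 with h | h
    · exact absurd h (X_ne_zero 2)
    · linear_combination h
  have hQdvd : X 0 ∣ Q₁ - Cc * X 2 := by
    apply X_dvd_of_phi_eq_zero
    rw [map_sub, map_mul, hphiCc, phi0_X2, ← hQ'def, hCc]
    ring
  obtain ⟨A', hA'⟩ := hQdvd
  have hRdvd : X 0 ∣ R₁ + Cc * X 1 := by
    apply X_dvd_of_phi_eq_zero
    rw [map_add, map_mul, hphiCc, phi0_X1, ← hR'def, hR'eq]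
    ring
  obtain ⟨B', hB'⟩ := hRdvd
  have hCc2 : Cc.totalDegree ≤ 2 :=
    deg_quot hCc.symm (le_trans (totalDegree_phi_le 0 Q₁) hQ)
  refine ⟨-A', -B', Cc, ?_, ?_, hCc2, ?_, ?_, ?_⟩
  · rw [totalDegree_neg]
    refine deg_quot hA'.symm ?_
    refine le_trans (totalDegree_sub _ _) ?_
    apply max_le hQ
    refine le_trans (totalDegree_mul _ _) ?_
    rw [totalDegree_X]
    omega
  · rw [totalDegree_neg]
    refine deg_quot hB'.symm ?_
    refine le_trans (totalDegree_add _ _) ?_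
    apply max_le hR
    refine le_trans (totalDegree_mul _ _) ?_
    rw [totalDegree_X]
    omega
  · have hx : X 0 * (P₁ - ((-A') * X 1 + (-B') * X 2)) = X 0 * 0 := by
      linear_combination hrel - X 1 * hA' - X 2 * hB'
    have := mul_left_cancel₀ (X_ne_zero 0) hx
    linear_combination this
  · linear_combination hA'
  · linear_combination hB'

end Stmt2Aux

namespace Stmt2Aux

lemma mem_span_X {M : MvPolynomial (Fin 3) ℝ} (hdeg : M.totalDegree ≤ 2)
    (hc : constantCoeff M = 0) :
    ∃ f g h : MvPolynomial (Fin 3) ℝ, f.totalDegree ≤ 1 ∧ g.totalDegree ≤ 1 ∧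
      h.totalDegree ≤ 1 ∧ M = X 0 * f + X 1 * g + X 2 * h := by
  obtain ⟨f, hf⟩ := X_dvd_sub_phi 0 M
  obtain ⟨g, hg⟩ := X_dvd_sub_phi 1 (phi 0 M)
  have hp2 : phi 2 (phi 1 (phi 0 M)) = 0 := by
    rw [phi_all, hc, map_zero]
  obtain ⟨h, hh⟩ := X_dvd_of_phi_eq_zero hp2
  have d0 : (phi 0 M).totalDegree ≤ 2 := le_trans (totalDegree_phi_le 0 M) hdeg
  have d1 : (phi 1 (phi 0 M)).totalDegree ≤ 2 := le_trans (totalDegree_phi_le 1 _) d0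
  refine ⟨f, g, h, ?_, ?_, ?_, ?_⟩
  · refine deg_quot hf.symm ?_
    exact le_trans (totalDegree_sub _ _) (max_le hdeg d0)
  · refine deg_quot hg.symm ?_
    exact le_trans (totalDegree_sub _ _) (max_le d0 d1)
  · exact deg_quot hh.symm d1
  · linear_combination hf + hg + hh

end Stmt2Aux

open Stmt2Aux in
theorem stmt_2 (P Q R : MvPolynomial (Fin 3) ℝ)
    (hP3 : P.totalDegree ≤ 3) (hQ3 : Q.totalDegree ≤ 3) (hR3 : R.totalDegree ≤ 3)
    (hinv : ∃ K : MvPolynomial (Fin 3) ℝ,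
      2 * (P * X 0 + Q * X 1 + R * X 2) =
        K * ((X 0) ^ 2 + (X 1) ^ 2 + (X 2) ^ 2 - 1)) :
    ∃ f g h A B C : MvPolynomial (Fin 3) ℝ,
      f.totalDegree ≤ 1 ∧ g.totalDegree ≤ 1 ∧ h.totalDegree ≤ 1 ∧
      A.totalDegree ≤ 2 ∧ B.totalDegree ≤ 2 ∧ C.totalDegree ≤ 2 ∧
      constantCoeff A = 0 ∧ constantCoeff B = 0 ∧ constantCoeff C = 0 ∧
      P = (1 - (X 0) ^ 2 - (X 1) ^ 2 - (X 2) ^ 2) * f + A * X 1 + B * X 2 ∧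
      Q = (1 - (X 0) ^ 2 - (X 1) ^ 2 - (X 2) ^ 2) * g - A * X 0 + C * X 2 ∧
      R = (1 - (X 0) ^ 2 - (X 1) ^ 2 - (X 2) ^ 2) * h - B * X 0 - C * X 1 := by
  classical
  obtain ⟨K, hK⟩ := hinv
  -- notation
  have hccK : constantCoeff K = 0 := by
    have h := congrArg constantCoeff hK
    simp only [map_add, map_mul, map_sub, map_pow, map_one, map_ofNat,
      constantCoeff_X] at h
    norm_num at h
    exact h
  -- degree of D
  have hDcoeff : coeff (Finsupp.single (0 : Fin 3) 2)
      ((X 0) ^ 2 + (X 1) ^ 2 + (X 2) ^ 2 - 1 : MvPolynomial (Fin 3) ℝ) = 1 := by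
    rw [coeff_sub, coeff_add, coeff_add, coeff_X_pow, coeff_X_pow, coeff_X_pow]
    have e1 : Finsupp.single (0:Fin 3) 2 = Finsupp.single (0:Fin 3) 2 := rfl
    have e2 : ¬ (Finsupp.single (1:Fin 3) 2 = Finsupp.single (0:Fin 3) 2) := by
      intro h; have := DFunLike.congr_fun h 1; simp at this
    have e3 : ¬ (Finsupp.single (2:Fin 3) 2 = Finsupp.single (0:Fin 3) 2) := by
      intro h; have := DFunLike.congr_fun h 2; simp at this
    rw [if_pos e1, if_neg e2, if_neg e3]
    have e4 : coeff (Finsupp.single (0:Fin 3) 2) (1 : MvPolynomial (Fin 3) ℝ) = 0 := by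
      rw [coeff_one, if_neg]
      intro h; have := DFunLike.congr_fun h 0; simp at this
    rw [e4]
    norm_num
  have hDne : ((X 0) ^ 2 + (X 1) ^ 2 + (X 2) ^ 2 - 1 : MvPolynomial (Fin 3) ℝ) ≠ 0 := by
    intro h; rw [h, coeff_zero] at hDcoeff; norm_num at hDcoeff
  have hDge : 2 ≤ ((X 0) ^ 2 + (X 1) ^ 2 + (X 2) ^ 2 - 1 : MvPolynomial (Fin 3) ℝ).totalDegree := by
    have hmem : Finsupp.single (0 : Fin 3) 2 ∈
        ((X 0) ^ 2 + (X 1) ^ 2 + (X 2) ^ 2 - 1 : MvPolynomial (Fin 3) ℝ).support := by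
      rw [mem_support_iff, hDcoeff]; norm_num
    have := le_totalDegree hmem
    rwa [Finsupp.sum_single_index rfl] at this
  have hDle : ((X 0) ^ 2 + (X 1) ^ 2 + (X 2) ^ 2 - 1 : MvPolynomial (Fin 3) ℝ).totalDegree ≤ 2 := by
    refine le_trans (totalDegree_sub _ _) (max_le ?_ (by simp [totalDegree_one]))
    refine le_trans (totalDegree_add _ _) (max_le (le_trans (totalDegree_add _ _) (max_le ?_ ?_)) ?_) <;>
      simp [totalDegree_X_pow]
  -- the multiplier M = K/2
  have h2C : (C (2⁻¹:ℝ) : MvPolynomial (Fin 3) ℝ) * 2 = 1 := by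
    have h2 : ((2:MvPolynomial (Fin 3) ℝ)) = C (2:ℝ) := by simp [map_ofNat]
    rw [h2, ← map_mul]
    norm_num
  have hS : P * X 0 + Q * X 1 + R * X 2 =
      (C (2⁻¹:ℝ) * K) * ((X 0)^2 + (X 1)^2 + (X 2)^2 - 1) := by
    calc P * X 0 + Q * X 1 + R * X 2
        = (C (2⁻¹:ℝ) * 2) * (P * X 0 + Q * X 1 + R * X 2) := by rw [h2C, one_mul]
      _ = C (2⁻¹:ℝ) * (2 * (P * X 0 + Q * X 1 + R * X 2)) := by ring
      _ = C (2⁻¹:ℝ) * (K * ((X 0)^2 + (X 1)^2 + (X 2)^2 - 1)) := by rw [hK]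
      _ = (C (2⁻¹:ℝ) * K) * ((X 0)^2 + (X 1)^2 + (X 2)^2 - 1) := by ring
  have hccM : constantCoeff (C (2⁻¹:ℝ) * K) = 0 := by simp [hccK]
  have hMdeg : (C (2⁻¹:ℝ) * K).totalDegree ≤ 2 := by
    by_cases hK0 : K = 0
    · simp [hK0]
    · have hS4 : (P * X 0 + Q * X 1 + R * X 2).totalDegree ≤ 4 := by
        refine le_trans (totalDegree_add _ _)
          (max_le (le_trans (totalDegree_add _ _) (max_le ?_ ?_)) ?_) <;>
        · refine le_trans (totalDegree_mul _ _) ?_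
          rw [totalDegree_X]
          omega
      have h2S : (2 * (P * X 0 + Q * X 1 + R * X 2)).totalDegree ≤ 4 := by
        have h2' : ((2:MvPolynomial (Fin 3) ℝ)) = C (2:ℝ) := by simp [map_ofNat]
        rw [h2']
        refine le_trans (totalDegree_mul _ _) ?_
        rw [totalDegree_C]
        omega
      rw [hK] at h2S
      have hprod := le_totalDegree_mul hK0 hDne
      refine le_trans (totalDegree_mul _ _) ?_
      rw [totalDegree_C]
      omega
  obtain ⟨f', g', h', hf1, hg1, hh1, hspan⟩ := mem_span_X hMdeg hccM
  have hrel : (P - ((X 0)^2 + (X 1)^2 + (X 2)^2 - 1) * f') * X 0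
      + (Q - ((X 0)^2+(X 1)^2+(X 2)^2-1) * g') * X 1
      + (R - ((X 0)^2+(X 1)^2+(X 2)^2-1) * h') * X 2 = 0 := by
    linear_combination hS + ((X 0)^2+(X 1)^2+(X 2)^2-1) * hspan
  have hdP : (P - ((X 0)^2+(X 1)^2+(X 2)^2-1) * f').totalDegree ≤ 3 := by
    refine le_trans (totalDegree_sub _ _) (max_le hP3 ?_)
    refine le_trans (totalDegree_mul _ _) ?_
    omega
  have hdQ : (Q - ((X 0)^2+(X 1)^2+(X 2)^2-1) * g').totalDegree ≤ 3 := by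
    refine le_trans (totalDegree_sub _ _) (max_le hQ3 ?_)
    refine le_trans (totalDegree_mul _ _) ?_
    omega
  have hdR : (R - ((X 0)^2+(X 1)^2+(X 2)^2-1) * h').totalDegree ≤ 3 := by
    refine le_trans (totalDegree_sub _ _) (max_le hR3 ?_)
    refine le_trans (totalDegree_mul _ _) ?_
    omega
  obtain ⟨A, B, Cc, hA2, hB2, hC2, hPe, hQe, hRe⟩ := koszul hdP hdQ hdR hrel
  have hr2 : ((X 0)^2 + (X 1)^2 + (X 2)^2 : MvPolynomial (Fin 3) ℝ).totalDegree ≤ 2 := by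
    refine le_trans (totalDegree_add _ _)
      (max_le (le_trans (totalDegree_add _ _) (max_le ?_ ?_)) ?_) <;>
      simp [totalDegree_X_pow]
  have hccr2 : constantCoeff ((X 0)^2 + (X 1)^2 + (X 2)^2 : MvPolynomial (Fin 3) ℝ) = 0 := by
    simp
  refine ⟨-f' + C (constantCoeff A) * X 1 + C (constantCoeff B) * X 2,
      -g' - C (constantCoeff A) * X 0 + C (constantCoeff Cc) * X 2,
      -h' - C (constantCoeff B) * X 0 - C (constantCoeff Cc) * X 1,
      A - C (constantCoeff A) + C (constantCoeff A) * ((X 0)^2+(X 1)^2+(X 2)^2),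
      B - C (constantCoeff B) + C (constantCoeff B) * ((X 0)^2+(X 1)^2+(X 2)^2),
      Cc - C (constantCoeff Cc) + C (constantCoeff Cc) * ((X 0)^2+(X 1)^2+(X 2)^2),
      ?_, ?_, ?_, ?_, ?_, ?_, ?_, ?_, ?_, ?_, ?_, ?_⟩
  · refine le_trans (totalDegree_add _ _)
      (max_le (le_trans (totalDegree_add _ _) (max_le ?_ ?_)) ?_)
    · rw [totalDegree_neg]; exact hf1
    all_goals
      refine le_trans (totalDegree_mul _ _) ?_
      rw [totalDegree_C, totalDegree_X]
  · refine le_trans (totalDegree_add _ _)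
      (max_le (le_trans (totalDegree_sub _ _) (max_le ?_ ?_)) ?_)
    · rw [totalDegree_neg]; exact hg1
    all_goals
      refine le_trans (totalDegree_mul _ _) ?_
      rw [totalDegree_C, totalDegree_X]
  · refine le_trans (totalDegree_sub _ _)
      (max_le (le_trans (totalDegree_sub _ _) (max_le ?_ ?_)) ?_)
    · rw [totalDegree_neg]; exact hh1
    all_goals
      refine le_trans (totalDegree_mul _ _) ?_
      rw [totalDegree_C, totalDegree_X]
  · refine le_trans (totalDegree_add _ _)
      (max_le (le_trans (totalDegree_sub _ _) (max_le hA2 ?_)) ?_)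
    · simp [totalDegree_C]
    · refine le_trans (totalDegree_mul _ _) ?_
      rw [totalDegree_C]
      omega
  · refine le_trans (totalDegree_add _ _)
      (max_le (le_trans (totalDegree_sub _ _) (max_le hB2 ?_)) ?_)
    · simp [totalDegree_C]
    · refine le_trans (totalDegree_mul _ _) ?_
      rw [totalDegree_C]
      omega
  · refine le_trans (totalDegree_add _ _)
      (max_le (le_trans (totalDegree_sub _ _) (max_le hC2 ?_)) ?_)
    · simp [totalDegree_C]
    · refine le_trans (totalDegree_mul _ _) ?_
      rw [totalDegree_C]
      omega
  · simp [hccr2]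
  · simp [hccr2]
  · simp [hccr2]
  · linear_combination hPe
  · linear_combination hQe
  · linear_combination hRe
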